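/- For an α-exp-concave function f on a convex domain X with diameter at most D and gradients bounded by G, for all x, y in X: f(y) ≥ f(x) + ⟨∇f(x), y−x⟩ + (β/2)⟨∇f(x), y−x⟩², where β = (1/2)·min{1/(4GD), α}. -/

import Mathlib

local notation "⟪" x ", " y "⟫" => @inner ℝ _ _ x y

open Set Filter Topology in
private lemma cube_le_exp' {t : ℝ} (ht : -3 ≤ t) : (1 + t/3)^3 ≤ Real.exp t := by
  have h := Real.add_one_le_exp (t/3)
  have h0 : (0:ℝ) ≤ 1 + t/3 := by linarith
  have he : Real.exp t = Real.exp (t/3) ^ 3 := by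
    rw [← Real.exp_nat_mul]; ring_nf
  rw [he]
  exact pow_le_pow_left₀ h0 (by linarith) 3

private lemma log_one_sub_le' {a : ℝ} (ha : |a| ≤ 1/4) :
    Real.log (1 - a) ≤ -a - a^2/4 := by
  rw [abs_le] at ha
  have h1 : (0:ℝ) < 1 - a := by linarith
  rw [Real.log_le_iff_le_exp h1]
  have ht : (-3:ℝ) ≤ -a - a^2/4 := by nlinarith
  have := cube_le_exp' ht
  nlinarith [sq_nonneg a, sq_nonneg (a*(1-4*a)), sq_nonneg (a*(1+4*a)), sq_nonneg (a*a)]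

open Set Filter Topology in
private lemma concave_grad_ineq' {d : ℕ} {X : Set (EuclideanSpace ℝ (Fin d))}
    {g : EuclideanSpace ℝ (Fin d) → ℝ} {gx : EuclideanSpace ℝ (Fin d)}
    {x y : EuclideanSpace ℝ (Fin d)}
    (hg : ConcaveOn ℝ X g) (hgrad : HasGradientAt g gx x)
    (hx : x ∈ X) (hy : y ∈ X) : g y ≤ g x + ⟪gx, y - x⟫ := by
  set ψ : ℝ → ℝ := fun t => g (x + t • (y - x)) with hψ
  have hc : HasDerivAt (fun t : ℝ => x + t • (y - x)) (y - x) 0 := by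
    simpa using ((hasDerivAt_id (0:ℝ)).smul_const (y - x)).const_add x
  have hd : HasDerivAt ψ ⟪gx, y - x⟫ 0 := by
    have hfd : HasFDerivAt g ((InnerProductSpace.toDual ℝ (EuclideanSpace ℝ (Fin d))) gx)
        (x + (0:ℝ) • (y - x)) := by simpa using hgrad.hasFDerivAt
    have h2 := hfd.comp_hasDerivAt 0 hc
    simp only [InnerProductSpace.toDual_apply_apply] at h2
    exact h2
  have hslope := hasDerivAt_iff_tendsto_slope.1 hd
  have hslope' : Tendsto (slope ψ 0) (𝓝[>] 0) (𝓝 ⟪gx, y - x⟫) :=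
    hslope.mono_left (nhdsWithin_mono 0 (fun t ht => ne_of_gt ht))
  have key : ∀ᶠ t in 𝓝[>] (0:ℝ), g y - g x ≤ slope ψ 0 t := by
    filter_upwards [Ioc_mem_nhdsGT_of_mem (by norm_num : (0:ℝ) ∈ Set.Ico (0:ℝ) 1)]
      with t ht
    have hmem : x + t • (y - x) = (1 - t) • x + t • y := by module
    have hcc := hg.2 hx hy (by linarith [ht.2] : (0:ℝ) ≤ 1 - t) (le_of_lt ht.1)
      (by ring : (1 - t) + t = 1)
    rw [← hmem, smul_eq_mul, smul_eq_mul] at hcc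
    have h3 : t * (g y - g x) ≤ ψ t - ψ 0 := by
      simp only [hψ, zero_smul, add_zero]
      nlinarith
    rw [slope_def_field, sub_zero, le_div_iff₀ ht.1]
    linarith
  have := ge_of_tendsto hslope' key
  linarith

private lemma grad_exp_comp' {d : ℕ} {f : EuclideanSpace ℝ (Fin d) → ℝ}
    {v x : EuclideanSpace ℝ (Fin d)} (α : ℝ) (hf : HasGradientAt f v x) :
    HasGradientAt (fun x => Real.exp (-α * f x)) ((-α * Real.exp (-α * f x)) • v) x := by
  have hφ : HasDerivAt (fun u : ℝ => Real.exp (-α * u)) (-α * Real.exp (-α * f x)) (f x) := by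
    have := ((hasDerivAt_id (f x)).const_mul (-α)).exp
    simpa [mul_comm] using this
  have h2 := hφ.comp_hasFDerivAt x hf.hasFDerivAt
  rw [hasGradientAt_iff_hasFDerivAt]
  convert h2 using 1
  ext w
  simp [InnerProductSpace.toDual_apply_apply, real_inner_smul_left]
  · rfl
  · ext w; simp [InnerProductSpace.toDual_apply_apply, real_inner_smul_left]

/-- For an α-exp-concave function f on a convex domain X with diameter at most D and
gradients bounded by G, for all x, y ∈ X:
f(y) ≥ f(x) + ⟨∇f(x), y−x⟩ + (β/2)⟨∇f(x), y−x⟩², where β = (1/2)·min{1/(4GD), α}. -/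
theorem exp_concave_lower_bound {d : ℕ} (X : Set (EuclideanSpace ℝ (Fin d)))
    (f : EuclideanSpace ℝ (Fin d) → ℝ)
    (f' : EuclideanSpace ℝ (Fin d) → EuclideanSpace ℝ (Fin d))
    (α G D : ℝ) (hα : 0 < α) (hG : 0 < G) (hD : 0 < D)
    (hX : Convex ℝ X)
    (hdiam : ∀ x ∈ X, ∀ y ∈ X, ‖x - y‖ ≤ D)
    (hgrad : ∀ x ∈ X, HasGradientAt f (f' x) x)
    (hexp : ConcaveOn ℝ X (fun x => Real.exp (-α * f x)))
    (hGbound : ∀ x ∈ X, ‖f' x‖ ≤ G) :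
    ∀ x ∈ X, ∀ y ∈ X,
      f y ≥ f x + ⟪f' x, y - x⟫
        + ((1 / 2) * min (1 / (4 * G * D)) α) / 2 * ⟪f' x, y - x⟫ ^ 2 := by
  intro x hx y hy
  set z := ⟪f' x, y - x⟫ with hzdef
  have hzb : |z| ≤ G * D := by
    calc |z| ≤ ‖f' x‖ * ‖y - x‖ := abs_real_inner_le_norm _ _
      _ ≤ G * D := mul_le_mul (hGbound x hx) (hdiam y hy x hx) (norm_nonneg _) hG.le
  have hE : (0:ℝ) < Real.exp (-α * f x) := Real.exp_pos _
  have hgi := concave_grad_ineq' hexp (grad_exp_comp' α (hgrad x hx)) hx hy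
  rw [real_inner_smul_left, ← hzdef] at hgi
  have hfact : Real.exp (-α * f x) + -α * Real.exp (-α * f x) * z
      = Real.exp (-α * f x) * (1 - α * z) := by ring
  rw [hfact] at hgi
  have h1z : 0 < 1 - α * z := by
    have h := Real.exp_pos (-α * f y)
    by_contra hcon
    push_neg at hcon
    nlinarith
  set L₁ := Real.log (1 - α * z) with hL₁
  have hlog : -α * f y ≤ -α * f x + L₁ := by
    have h := Real.log_le_log (Real.exp_pos _) hgi
    rwa [Real.log_exp, Real.log_mul (ne_of_gt hE) (ne_of_gt h1z), Real.log_exp] at h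
  set γ := min (1 / (4 * G * D)) α with hγdef
  have hγpos : 0 < γ := lt_min (by positivity) hα
  have hγα : γ ≤ α := min_le_right _ _
  have hγGD : γ ≤ 1 / (4 * G * D) := min_le_left _ _
  -- Bernoulli
  have hp1 : γ / α ≤ 1 := (div_le_one hα).2 hγα
  have hp0 : 0 ≤ γ / α := by positivity
  have hs : (-1:ℝ) ≤ -(α * z) := by nlinarith
  have hb := rpow_one_add_le_one_add_mul_self hs hp0 hp1
  have hrw : 1 + -(α * z) = 1 - α * z := by ring
  have hrw2 : 1 + γ / α * -(α * z) = 1 - γ * z := by field_simp; ring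
  rw [hrw, hrw2] at hb
  have h2z : 0 < 1 - γ * z :=
    lt_of_lt_of_le (Real.rpow_pos_of_pos h1z (γ / α)) hb
  set L₂ := Real.log (1 - γ * z) with hL₂
  have hmono : γ / α * L₁ ≤ L₂ := by
    have h := Real.log_le_log (Real.rpow_pos_of_pos h1z (γ / α)) hb
    rwa [Real.log_rpow h1z] at h
  have hmono2 : L₁ / α ≤ L₂ / γ := by
    rw [div_le_div_iff₀ hα hγpos]
    have h := mul_le_mul_of_nonneg_left hmono hα.le
    have hαne : α ≠ 0 := ne_of_gt hα
    field_simp at h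
    nlinarith
  have habs : |γ * z| ≤ 1 / 4 := by
    rw [abs_mul, abs_of_pos hγpos]
    calc γ * |z| ≤ (1 / (4 * G * D)) * (G * D) := by
          apply mul_le_mul hγGD hzb (abs_nonneg _) (by positivity)
      _ = 1 / 4 := by field_simp
  have hlogD : L₂ ≤ -(γ * z) - (γ * z)^2 / 4 := log_one_sub_le' habs
  -- combine
  have hfy : f x - L₁ / α ≤ f y := by
    rw [sub_le_iff_le_add, ← sub_le_iff_le_add', le_div_iff₀ hα]
    nlinarith
  have hlast : z + γ * z^2 / 4 ≤ -(L₂ / γ) := by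
    rw [le_neg, neg_add, ← sub_eq_add_neg, div_le_iff₀ hγpos]
    nlinarith
  have hgoal : ((1 / 2) * γ) / 2 * z ^ 2 = γ * z^2 / 4 := by ring
  rw [ge_iff_le, hgoal]
  linarith
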